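/- For every m ≥ 3, the 2m-qubit state Ψ_m = (T†)^{⊗m}|GHZ(m)⟩ with |GHZ(m)⟩ = Σ_{i=0}^{3} |i⟩^{⊗m} ∈ (ℂ⁴)^{⊗m} is 3-uniform, given that Ψ₃ is 3-uniform. -/

import Mathlib

open Matrix Complex
open scoped BigOperators
noncomputable section

/-- Reduced density matrix of `ψ` on the sites in `S` (up to a uniform positive factor). -/
def red {n D : ℕ} (ψ : (Fin n → Fin D) → ℂ) (S : Finset (Fin n)) (a b : Fin n → Fin D) : ℂ :=
  ∑ f : Fin n → Fin D,
    ψ (fun i => if i ∈ S then a i else f i) *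
      (starRingEnd ℂ) (ψ (fun i => if i ∈ S then b i else f i))

/-- The reduction of `ψ` to the sites in `S` is proportional to the identity. -/
def UniformOn {n D : ℕ} (ψ : (Fin n → Fin D) → ℂ) (S : Finset (Fin n)) : Prop :=
  ∃ c : ℂ, ∀ a b, red ψ S a b = if (∀ i ∈ S, a i = b i) then c else 0

/-- `ψ` is `r`-uniform. -/
def IsUniform {n D : ℕ} (r : ℕ) (ψ : (Fin n → Fin D) → ℂ) : Prop :=
  ∀ S : Finset (Fin n), S.card = r → UniformOn ψ S

/-- The unitary matrix `T` from the paper. -/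
def Tmat : Matrix (Fin 4) (Fin 4) ℂ :=
  (Real.sqrt 2 : ℂ)⁻¹ • !![1, 0, 0, 1; 0, I, I, 0; 0, -1, 1, 0; I, 0, 0, -I]

/-- The generalized GHZ state `Σ_{i=0}^{3} |i⟩^{⊗m} ∈ (ℂ⁴)^{⊗m}`. -/
def GHZ (m : ℕ) (g : Fin m → Fin 4) : ℂ :=
  if ∃ c : Fin 4, ∀ k, g k = c then 1 else 0

/-- Grouping the `2m` qubit indices in pairs into `m` ququad indices, via `|i⟩|j⟩ ↦ |2i+j⟩`. -/
def quad {m : ℕ} (f : Fin (2 * m) → Fin 2) (k : Fin m) : Fin 4 :=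
  ⟨2 * (f ⟨2 * k.val, by have := k.isLt; omega⟩).val +
      (f ⟨2 * k.val + 1, by have := k.isLt; omega⟩).val,
    by have := (f ⟨2 * k.val, by have := k.isLt; omega⟩).isLt;
       have := (f ⟨2 * k.val + 1, by have := k.isLt; omega⟩).isLt; omega⟩

/-- The `2m`-qubit state `Ψ_m = (T†)^{⊗m} |GHZ(m)⟩`. -/
def Psi (m : ℕ) (f : Fin (2 * m) → Fin 2) : ℂ :=
  ∑ g : Fin m → Fin 4, (∏ k : Fin m, Tmatᴴ (quad f k) (g k)) * GHZ m g

/-- For every `m ≥ 3`, given that `Ψ₃` is 3-uniform, the `2m`-qubit state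
`Ψ_m = (T†)^{⊗m}|GHZ(m)⟩` is 3-uniform. -/
def p0 {m : ℕ} (k : Fin m) : Fin (2*m) := ⟨2*k.val, by have := k.isLt; omega⟩
def p1 {m : ℕ} (k : Fin m) : Fin (2*m) := ⟨2*k.val+1, by have := k.isLt; omega⟩
def gq {m : ℕ} (i : Fin (2*m)) : Fin m := ⟨i.val/2, by have := i.isLt; omega⟩
def mk2 (u v : Fin 2) : Fin 4 := ⟨2*u.val+v.val, by have := u.isLt; have := v.isLt; omega⟩

lemma quad_eq {m : ℕ} (f : Fin (2*m) → Fin 2) (k : Fin m) :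
    quad f k = mk2 (f (p0 k)) (f (p1 k)) := rfl

lemma gq_p0 {m : ℕ} (k : Fin m) : gq (p0 k) = k := by apply Fin.ext; simp [gq, p0]
lemma gq_p1 {m : ℕ} (k : Fin m) : gq (p1 k) = k := by apply Fin.ext; simp [gq, p1]; omega
lemma p0_gq {m : ℕ} (i : Fin (2*m)) (h : i.val % 2 = 0) : p0 (gq i) = i := by
  simp [gq, p0, Fin.ext_iff]; omega
lemma p1_gq {m : ℕ} (i : Fin (2*m)) (h : i.val % 2 = 1) : p1 (gq i) = i := by
  simp [gq, p1, Fin.ext_iff]; omega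
lemma mk2_inj {u v x y : Fin 2} : mk2 u v = mk2 x y ↔ u = x ∧ v = y := by
  constructor
  · intro h
    have := Fin.val_eq_of_eq h
    simp [mk2] at this
    constructor <;> [skip; skip] <;> apply Fin.ext <;> omega
  · rintro ⟨rfl, rfl⟩; rfl

lemma hs2 : ((Real.sqrt 2 : ℝ) : ℂ) * ((Real.sqrt 2 : ℝ) : ℂ) = 2 := by
  norm_cast
  rw [Real.mul_self_sqrt] <;> norm_num

lemma U4' (q r : Fin 4) :
    ∑ c : Fin 4, Tmatᴴ q c * (starRingEnd ℂ) (Tmatᴴ r c) = if q = r then 1 else 0 := by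
  have h2 : ((Real.sqrt 2 : ℝ) : ℂ) ≠ 0 := by
    norm_cast; positivity
  have hsq : ((Real.sqrt 2 : ℝ) : ℂ)^2 = 2 := by rw [sq]; exact hs2
  fin_cases q <;> fin_cases r <;>
    simp [Fin.sum_univ_four, Tmat, Matrix.conjTranspose_apply, Fin.ext_iff, map_inv₀] <;>
    try field_simp
  all_goals first
    | linear_combination hs2
    | linear_combination -hs2
    | rw [if_neg (by decide)]
    | (rw [← Complex.ofReal_pow, Real.sq_sqrt (by norm_num)]; norm_num; done)
    | simp

lemma U1 (c c' : Fin 4) :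
    ∑ u : Fin 2, ∑ v : Fin 2, Tmatᴴ (mk2 u v) c * (starRingEnd ℂ) (Tmatᴴ (mk2 u v) c') =
      if c = c' then 1 else 0 := by
  have h2 : ((Real.sqrt 2 : ℝ) : ℂ) ≠ 0 := by norm_cast; positivity
  fin_cases c <;> fin_cases c' <;>
    simp [Fin.sum_univ_two, Tmat, mk2, Matrix.conjTranspose_apply, Fin.ext_iff, map_inv₀] <;>
    try field_simp
  all_goals first
    | linear_combination hs2
    | linear_combination -hs2
    | rw [if_neg (by decide)]
    | (rw [← Complex.ofReal_pow, Real.sq_sqrt (by norm_num)]; norm_num; done)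
    | simp

lemma U2' (x y : Fin 2) (c : Fin 4) :
    ∑ u : Fin 2, ∑ v : Fin 2, Tmatᴴ (mk2 x v) c * (starRingEnd ℂ) (Tmatᴴ (mk2 y v) c) =
      if x = y then 1 else 0 := by
  have h2 : ((Real.sqrt 2 : ℝ) : ℂ) ≠ 0 := by norm_cast; positivity
  fin_cases x <;> fin_cases y <;> fin_cases c <;>
    simp [Fin.sum_univ_two, Tmat, mk2, Matrix.conjTranspose_apply, Fin.ext_iff, map_inv₀] <;>
    try field_simp
  all_goals first
    | linear_combination hs2
    | linear_combination -hs2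
    | linear_combination 2*hs2
    | linear_combination -2*hs2
    | rw [if_neg (by decide)]
    | (rw [← Complex.ofReal_pow, Real.sq_sqrt (by norm_num)]; norm_num; done)
    | simp

lemma U3' (x y : Fin 2) (c : Fin 4) :
    ∑ u : Fin 2, ∑ v : Fin 2, Tmatᴴ (mk2 u x) c * (starRingEnd ℂ) (Tmatᴴ (mk2 u y) c) =
      if x = y then 1 else 0 := by
  have h2 : ((Real.sqrt 2 : ℝ) : ℂ) ≠ 0 := by norm_cast; positivity
  fin_cases x <;> fin_cases y <;> fin_cases c <;>
    simp [Fin.sum_univ_two, Tmat, mk2, Matrix.conjTranspose_apply, Fin.ext_iff, map_inv₀] <;>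
    try field_simp
  all_goals first
    | linear_combination hs2
    | linear_combination -hs2
    | linear_combination 2*hs2
    | linear_combination -2*hs2
    | rw [if_neg (by decide)]
    | (rw [← Complex.ofReal_pow, Real.sq_sqrt (by norm_num)]; norm_num; done)
    | simp

lemma Psi_eq (m : ℕ) (hm : 0 < m) (f : Fin (2*m) → Fin 2) :
    Psi m f = ∑ c : Fin 4, ∏ k : Fin m, Tmatᴴ (quad f k) c := by
  classical
  symm
  calc ∑ c : Fin 4, ∏ k : Fin m, Tmatᴴ (quad f k) c
      = ∑ c : Fin 4, (∏ k : Fin m, Tmatᴴ (quad f k) ((fun _ : Fin m => c) k)) *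
          GHZ m (fun _ : Fin m => c) := by
        apply Finset.sum_congr rfl
        intro c _
        have h1 : GHZ m (fun _ : Fin m => c) = 1 := by
          rw [GHZ, if_pos ⟨c, fun _ => rfl⟩]
        rw [h1, mul_one]
    _ = ∑ g ∈ Finset.univ.image (fun c : Fin 4 => (fun _ : Fin m => c)),
          (∏ k : Fin m, Tmatᴴ (quad f k) (g k)) * GHZ m g := by
        rw [Finset.sum_image]
        intro x _ y _ h
        exact congrFun h ⟨0, hm⟩
    _ = ∑ g : Fin m → Fin 4, (∏ k : Fin m, Tmatᴴ (quad f k) (g k)) * GHZ m g := by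
        apply Finset.sum_subset (Finset.subset_univ _)
        intro g _ hg
        have h0 : GHZ m g = 0 := by
          rw [GHZ, if_neg]
          rintro ⟨c, hc⟩
          exact hg (Finset.mem_image.mpr ⟨c, Finset.mem_univ c, by funext k; exact (hc k).symm⟩)
        rw [h0, mul_zero]
    _ = Psi m f := rfl

lemma sum_pair_factor {m : ℕ} (h : Fin m → Fin 2 → Fin 2 → ℂ) :
    ∑ f : Fin (2*m) → Fin 2, ∏ k : Fin m, h k (f (p0 k)) (f (p1 k)) =
      ∏ k : Fin m, ∑ u : Fin 2, ∑ v : Fin 2, h k u v := by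
  classical
  have step1 : ∀ k : Fin m, (∑ u : Fin 2, ∑ v : Fin 2, h k u v) =
      ∑ p : Fin 2 × Fin 2, h k p.1 p.2 := fun k =>
    (Fintype.sum_prod_type (f := fun p : Fin 2 × Fin 2 => h k p.1 p.2)).symm
  simp_rw [step1]
  rw [Finset.prod_univ_sum]
  rw [Fintype.piFinset_univ]
  -- now: ∑ f ... = ∑ F : Fin m → Fin 2 × Fin 2, ∏ k, h k (F k).1 (F k).2
  set Φ : (Fin m → Fin 2 × Fin 2) → (Fin (2*m) → Fin 2) :=
    fun F i => if i.val % 2 = 0 then (F (gq i)).1 else (F (gq i)).2 with hΦ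
  have hbij : Function.Bijective Φ := by
    constructor
    · intro F G hfg
      funext k
      have h0 := congrFun hfg (p0 k)
      have h1 := congrFun hfg (p1 k)
      have e0 : (p0 k).val % 2 = 0 := by simp [p0]
      have e1 : ¬ ((p1 k).val % 2 = 0) := by simp [p1]
      simp only [hΦ, e0, e1, if_pos, if_neg, gq_p0, gq_p1, if_true, if_false] at h0 h1
      exact Prod.ext h0 h1
    · intro f
      refine ⟨fun k => (f (p0 k), f (p1 k)), ?_⟩
      funext i
      by_cases hi : i.val % 2 = 0
      · simp only [hΦ, hi, if_pos]
        rw [p0_gq i hi]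
      · simp only [hΦ, hi, if_neg, if_false]
        rw [p1_gq i (by omega)]
  have key := hbij.sum_comp (fun f : Fin (2*m) → Fin 2 => ∏ k : Fin m, h k (f (p0 k)) (f (p1 k)))
  rw [← key]
  apply Finset.sum_congr rfl
  intro F _
  apply Finset.prod_congr rfl
  intro k _
  have e0 : (p0 k).val % 2 = 0 := by simp [p0]
  have e1 : ¬ ((p1 k).val % 2 = 0) := by simp [p1]
  simp only [hΦ, e0, e1, if_pos, if_neg, gq_p0, gq_p1, if_true, if_false]

def W {m : ℕ} (S : Finset (Fin (2*m))) (a b : Fin (2*m) → Fin 2) (c c' : Fin 4) (k : Fin m) : ℂ :=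
  ∑ u : Fin 2, ∑ v : Fin 2,
    Tmatᴴ (mk2 (if p0 k ∈ S then a (p0 k) else u) (if p1 k ∈ S then a (p1 k) else v)) c *
      (starRingEnd ℂ)
        (Tmatᴴ (mk2 (if p0 k ∈ S then b (p0 k) else u) (if p1 k ∈ S then b (p1 k) else v)) c')

lemma redPsi (m : ℕ) (hm : 0 < m) (S : Finset (Fin (2*m))) (a b : Fin (2*m) → Fin 2) :
    red (Psi m) S a b = ∑ c : Fin 4, ∑ c' : Fin 4, ∏ k : Fin m, W S a b c c' k := by
  classical
  rw [red]
  have hterm : ∀ f : Fin (2*m) → Fin 2,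
      Psi m (fun i => if i ∈ S then a i else f i) *
        (starRingEnd ℂ) (Psi m (fun i => if i ∈ S then b i else f i)) =
      ∑ c : Fin 4, ∑ c' : Fin 4, ∏ k : Fin m,
        (Tmatᴴ (mk2 (if p0 k ∈ S then a (p0 k) else f (p0 k))
                    (if p1 k ∈ S then a (p1 k) else f (p1 k))) c *
          (starRingEnd ℂ)
            (Tmatᴴ (mk2 (if p0 k ∈ S then b (p0 k) else f (p0 k))
                        (if p1 k ∈ S then b (p1 k) else f (p1 k))) c')) := by
    intro f
    rw [Psi_eq m hm, Psi_eq m hm, map_sum, Finset.sum_mul_sum]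
    apply Finset.sum_congr rfl
    intro c _
    apply Finset.sum_congr rfl
    intro c' _
    rw [map_prod, ← Finset.prod_mul_distrib]
    apply Finset.prod_congr rfl
    intro k _
    rw [quad_eq, quad_eq]
  simp_rw [hterm]
  rw [Finset.sum_comm]
  apply Finset.sum_congr rfl
  intro c _
  rw [Finset.sum_comm]
  apply Finset.sum_congr rfl
  intro c' _
  exact sum_pair_factor (fun k u v =>
    Tmatᴴ (mk2 (if p0 k ∈ S then a (p0 k) else u) (if p1 k ∈ S then a (p1 k) else v)) c *
      (starRingEnd ℂ)
        (Tmatᴴ (mk2 (if p0 k ∈ S then b (p0 k) else u) (if p1 k ∈ S then b (p1 k) else v)) c'))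

lemma W_untouched {m : ℕ} {S : Finset (Fin (2*m))} {a b : Fin (2*m) → Fin 2} {c c' : Fin 4}
    {k : Fin m} (h0 : p0 k ∉ S) (h1 : p1 k ∉ S) :
    W S a b c c' k = if c = c' then 1 else 0 := by
  rw [W]
  simp only [h0, h1, if_false, if_neg]
  exact U1 c c'

lemma W_diag {m : ℕ} {S : Finset (Fin (2*m))} {a b : Fin (2*m) → Fin 2} {c : Fin 4}
    {k : Fin m} (hnd : ¬ (p0 k ∈ S ∧ p1 k ∈ S)) :
    W S a b c c k =
      if (p0 k ∈ S → a (p0 k) = b (p0 k)) ∧ (p1 k ∈ S → a (p1 k) = b (p1 k)) then 1 else 0 := by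
  rw [W]
  by_cases h0 : p0 k ∈ S <;> by_cases h1 : p1 k ∈ S
  · exact absurd ⟨h0, h1⟩ hnd
  · simp only [h0, h1, if_true, if_false, if_neg, if_pos]
    rw [U2' (a (p0 k)) (b (p0 k)) c]
    simp [h0, h1]
  · simp only [h0, h1, if_true, if_false, if_neg, if_pos]
    rw [U3' (a (p1 k)) (b (p1 k)) c]
    simp [h0, h1]
  · simp only [h0, h1, if_false, if_neg]
    rw [U1 c c]
    simp [h0, h1]

lemma W_double {m : ℕ} {S : Finset (Fin (2*m))} {a b : Fin (2*m) → Fin 2}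
    {k : Fin m} (h0 : p0 k ∈ S) (h1 : p1 k ∈ S) :
    ∑ c : Fin 4, W S a b c c k =
      if a (p0 k) = b (p0 k) ∧ a (p1 k) = b (p1 k) then 4 else 0 := by
  simp only [W, h0, h1, if_true, if_pos]
  have : ∀ c : Fin 4, ∑ u : Fin 2, ∑ v : Fin 2,
      Tmatᴴ (mk2 (a (p0 k)) (a (p1 k))) c *
        (starRingEnd ℂ) (Tmatᴴ (mk2 (b (p0 k)) (b (p1 k))) c) =
      4 * (Tmatᴴ (mk2 (a (p0 k)) (a (p1 k))) c *
        (starRingEnd ℂ) (Tmatᴴ (mk2 (b (p0 k)) (b (p1 k))) c)) := by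
    intro c
    simp [Fin.sum_univ_two]
    ring
  simp_rw [this]
  rw [← Finset.mul_sum, U4']
  simp only [mk2_inj]
  split_ifs <;> norm_num


lemma cover {m : ℕ} (S : Finset (Fin (2*m))) (a b : Fin (2*m) → Fin 2)
    (h : ∀ k : Fin m,
      (p0 k ∈ S → a (p0 k) = b (p0 k)) ∧ (p1 k ∈ S → a (p1 k) = b (p1 k))) :
    ∀ i ∈ S, a i = b i := by
  intro i hi
  by_cases hp : i.val % 2 = 0
  · have h' := (h (gq i)).1
    rw [p0_gq i hp] at h'
    exact h' hi
  · have h' := (h (gq i)).2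
    rw [p1_gq i (by omega)] at h'
    exact h' hi

lemma main4 (m : ℕ) (hm : 4 ≤ m) : IsUniform 3 (Psi m) := by
  classical
  intro S hS
  obtain ⟨k0, hk0⟩ : ∃ k0 : Fin m, k0 ∉ S.image gq := by
    by_contra hcon
    push_neg at hcon
    have huniv : S.image gq = Finset.univ := Finset.eq_univ_iff_forall.mpr hcon
    have h1 : (S.image gq).card ≤ 3 := hS ▸ Finset.card_image_le
    rw [huniv, Finset.card_univ, Fintype.card_fin] at h1
    omega
  have hp0 : p0 k0 ∉ S := fun h => hk0 (Finset.mem_image.mpr ⟨p0 k0, h, gq_p0 k0⟩)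
  have hp1 : p1 k0 ∉ S := fun h => hk0 (Finset.mem_image.mpr ⟨p1 k0, h, gq_p1 k0⟩)
  refine ⟨4, fun a b => ?_⟩
  rw [redPsi m (by omega) S a b]
  have hdiagsum : ∀ c : Fin 4,
      ∑ c' : Fin 4, ∏ k : Fin m, W S a b c c' k = ∏ k : Fin m, W S a b c c k := by
    intro c
    apply Finset.sum_eq_single c
    · intro c' _ hne
      apply Finset.prod_eq_zero (Finset.mem_univ k0)
      rw [W_untouched hp0 hp1, if_neg (fun h => hne h.symm)]
    · intro habs
      exact absurd (Finset.mem_univ c) habs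
  simp_rw [hdiagsum]
  by_cases hd : ∃ k1 : Fin m, p0 k1 ∈ S ∧ p1 k1 ∈ S
  · obtain ⟨k1, h10, h11⟩ := hd
    have hnd : ∀ k : Fin m, k ≠ k1 → ¬ (p0 k ∈ S ∧ p1 k ∈ S) := by
      rintro k hk ⟨g0, g1⟩
      have hsub : ({p0 k1, p1 k1, p0 k, p1 k} : Finset (Fin (2*m))) ⊆ S := by
        intro x hx
        simp only [Finset.mem_insert, Finset.mem_singleton] at hx
        rcases hx with rfl | rfl | rfl | rfl <;> assumption
      have hkk : k.val ≠ k1.val := fun h => hk (Fin.ext h)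
      have hcard : ({p0 k1, p1 k1, p0 k, p1 k} : Finset (Fin (2*m))).card = 4 := by
        rw [Finset.card_insert_of_notMem (by
              simp only [Finset.mem_insert, Finset.mem_singleton, Fin.ext_iff, p0, p1]
              omega),
            Finset.card_insert_of_notMem (by
              simp only [Finset.mem_insert, Finset.mem_singleton, Fin.ext_iff, p0, p1]
              omega),
            Finset.card_insert_of_notMem (by
              simp only [Finset.mem_singleton, Fin.ext_iff, p0, p1]
              omega),
            Finset.card_singleton]
      have hle := Finset.card_le_card hsub
      rw [hcard, hS] at hle
      omega
    have hsplit : ∀ c : Fin 4, ∏ k : Fin m, W S a b c c k =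
        W S a b c c k1 * ∏ k ∈ Finset.univ.erase k1, W S a b c c k := fun c =>
      (Finset.mul_prod_erase Finset.univ _ (Finset.mem_univ k1)).symm
    simp_rw [hsplit]
    have hrest : ∀ c : Fin 4, ∏ k ∈ Finset.univ.erase k1, W S a b c c k =
        if ∀ k ∈ Finset.univ.erase k1,
            ((p0 k ∈ S → a (p0 k) = b (p0 k)) ∧ (p1 k ∈ S → a (p1 k) = b (p1 k)))
          then 1 else 0 := by
      intro c
      rw [Finset.prod_congr rfl (fun k hk => W_diag (hnd k (Finset.ne_of_mem_erase hk))),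
          Finset.prod_boole]
      convert rfl using 2
    simp_rw [hrest, ← Finset.sum_mul, W_double h10 h11]
    by_cases hall : ∀ i ∈ S, a i = b i
    · rw [if_pos hall, if_pos ⟨hall _ h10, hall _ h11⟩,
          if_pos (fun k _ => ⟨fun h => hall _ h, fun h => hall _ h⟩), mul_one]
    · rw [if_neg hall]
      by_cases hA : a (p0 k1) = b (p0 k1) ∧ a (p1 k1) = b (p1 k1)
      · rw [if_pos hA, if_neg, mul_zero]
        intro hB
        apply hall
        apply cover S a b
        intro k
        by_cases hk : k = k1
        · subst hk
          exact ⟨fun _ => hA.1, fun _ => hA.2⟩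
        · exact hB k (Finset.mem_erase.mpr ⟨hk, Finset.mem_univ k⟩)
      · rw [if_neg hA, zero_mul]
  · push_neg at hd
    have hall : ∀ c : Fin 4, ∏ k : Fin m, W S a b c c k =
        if ∀ k : Fin m,
            ((p0 k ∈ S → a (p0 k) = b (p0 k)) ∧ (p1 k ∈ S → a (p1 k) = b (p1 k)))
          then 1 else 0 := by
      intro c
      rw [Finset.prod_congr rfl (fun k _ => W_diag (fun h => hd k h.1 h.2)),
          Finset.prod_boole]
      simp only [Finset.mem_univ, forall_true_left, true_implies]
    simp_rw [hall]
    rw [Finset.sum_const, Finset.card_univ, Fintype.card_fin]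
    by_cases hab : ∀ i ∈ S, a i = b i
    · rw [if_pos hab, if_pos (fun k => ⟨fun h => hab _ h, fun h => hab _ h⟩)]
      norm_num
    · rw [if_neg hab, if_neg, smul_zero]
      intro hB
      exact hab (cover S a b hB)

theorem stmt_11 (m : ℕ) (hm : 3 ≤ m) (h3 : IsUniform 3 (Psi 3)) : IsUniform 3 (Psi m) := by
  by_cases hm3 : m = 3
  · subst hm3
    exact h3
  · exact main4 m (by omega)
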